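/- The Euclidean distance in ℝ³ between a main diagonal of the unit cube [0,1]³ (say the segment from (0,0,0) to (1,1,1)) and the disjoint diagonal of the face x₃ = 0 from (1,0,0) to (0,1,0) equals 1/√6. -/

import Mathlib

noncomputable def setDist {E : Type*} [PseudoMetricSpace E] (P Q : Set E) : ℝ :=
  sInf (Set.image2 dist P Q)

theorem stmt_13 :
    setDist (segment ℝ ((WithLp.equiv 2 (Fin 3 → ℝ)).symm ![0, 0, 0]) ((WithLp.equiv 2 (Fin 3 → ℝ)).symm ![1, 1, 1]))
        (segment ℝ ((WithLp.equiv 2 (Fin 3 → ℝ)).symm ![1, 0, 0]) ((WithLp.equiv 2 (Fin 3 → ℝ)).symm ![0, 1, 0])) =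
      1 / Real.sqrt 6 := by
  have key : ∀ x ∈ segment ℝ ((WithLp.equiv 2 (Fin 3 → ℝ)).symm ![0, 0, 0])
      ((WithLp.equiv 2 (Fin 3 → ℝ)).symm ![1, 1, 1]),
      ∀ y ∈ segment ℝ ((WithLp.equiv 2 (Fin 3 → ℝ)).symm ![1, 0, 0])
      ((WithLp.equiv 2 (Fin 3 → ℝ)).symm ![0, 1, 0]), dist x y = Real.sqrt
        ((x 0 - y 0)^2 + (x 1 - y 1)^2 + (x 2 - y 2)^2) := by
    intro x _ y _
    rw [EuclideanSpace.dist_eq, Fin.sum_univ_three]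
    simp [Real.dist_eq, sq_abs]
  have hsqrt : (1 : ℝ) / Real.sqrt 6 = Real.sqrt (1/6) := by
    rw [one_div, one_div, Real.sqrt_inv]
  -- antisymmetry
  apply le_antisymm
  · -- sInf ≤ dist x0 y0 = √(1/6)
    have hx : ((WithLp.equiv 2 (Fin 3 → ℝ)).symm ![(1:ℝ)/3, 1/3, 1/3]) ∈
        segment ℝ ((WithLp.equiv 2 (Fin 3 → ℝ)).symm ![0, 0, 0])
          ((WithLp.equiv 2 (Fin 3 → ℝ)).symm ![1, 1, 1]) := by
      refine ⟨2/3, 1/3, by norm_num, by norm_num, by norm_num, ?_⟩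
      ext i
      fin_cases i <;> simp [WithLp.equiv_symm_apply, PiLp.toLp_apply]
    have hy : ((WithLp.equiv 2 (Fin 3 → ℝ)).symm ![(1:ℝ)/2, 1/2, 0]) ∈
        segment ℝ ((WithLp.equiv 2 (Fin 3 → ℝ)).symm ![1, 0, 0])
          ((WithLp.equiv 2 (Fin 3 → ℝ)).symm ![0, 1, 0]) := by
      refine ⟨1/2, 1/2, by norm_num, by norm_num, by norm_num, ?_⟩
      ext i
      fin_cases i <;> simp [WithLp.equiv_symm_apply, PiLp.toLp_apply]
    have hmem : dist ((WithLp.equiv 2 (Fin 3 → ℝ)).symm ![(1:ℝ)/3, 1/3, 1/3])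
        ((WithLp.equiv 2 (Fin 3 → ℝ)).symm ![(1:ℝ)/2, 1/2, 0]) ∈
        Set.image2 dist (segment ℝ ((WithLp.equiv 2 (Fin 3 → ℝ)).symm ![0, 0, 0])
          ((WithLp.equiv 2 (Fin 3 → ℝ)).symm ![1, 1, 1]))
        (segment ℝ ((WithLp.equiv 2 (Fin 3 → ℝ)).symm ![1, 0, 0])
          ((WithLp.equiv 2 (Fin 3 → ℝ)).symm ![0, 1, 0])) :=
      Set.mem_image2_of_mem hx hy
    have hd : dist ((WithLp.equiv 2 (Fin 3 → ℝ)).symm ![(1:ℝ)/3, 1/3, 1/3])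
        ((WithLp.equiv 2 (Fin 3 → ℝ)).symm ![(1:ℝ)/2, 1/2, 0]) = 1 / Real.sqrt 6 := by
      rw [key _ hx _ hy, hsqrt]
      congr 1
      norm_num [WithLp.equiv_symm_apply, PiLp.toLp_apply, Matrix.cons_val_two, Matrix.tail_cons, Matrix.head_cons]
    calc setDist _ _ ≤ _ := csInf_le ⟨0, fun r hr => by
            obtain ⟨a, _, b, _, rfl⟩ := hr; exact dist_nonneg⟩ hmem
      _ = 1 / Real.sqrt 6 := hd
  · -- lower bound
    apply le_csInf
    · exact ⟨_, Set.mem_image2_of_mem (left_mem_segment ℝ _ _) (left_mem_segment ℝ _ _)⟩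
    · rintro r ⟨x, hx, y, hy, rfl⟩
      rw [key _ hx _ hy, hsqrt]
      apply Real.sqrt_le_sqrt
      obtain ⟨a, b, ha, hb, hab, rfl⟩ := hx
      obtain ⟨c, d, hc, hd, hcd, rfl⟩ := hy
      have e0 : ∀ (p q : ℝ) (i : Fin 3) (u v : Fin 3 → ℝ),
          (p • (WithLp.equiv 2 (Fin 3 → ℝ)).symm u + q • (WithLp.equiv 2 (Fin 3 → ℝ)).symm v) i
            = p * u i + q * v i := fun _ _ _ _ _ => rfl
      simp only [e0]
      norm_num [Matrix.cons_val_two, Matrix.tail_cons, Matrix.head_cons]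
      nlinarith [sq_nonneg (3*b - 1), sq_nonneg (2*d - 1), sq_nonneg (b + d - 1), sq_nonneg (b - d), sq_nonneg b]
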